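/- arXiv:1503.04346 — 2 statements merged into one kernel-verified Lean document; each statement's English description precedes it below -/
import Mathlib

section
/- Let F be a linearly ordered field. A square matrix A ∈ Mₙ(F) is bibounded (A ~ Iₙ, i.e., ∃ r ∈ ℕ with AᵀA ≤ r·Iₙ and Iₙ ≤ r·AᵀA in the Loewner order) if and only if A is invertible and all entries of both A and A⁻¹ are bounded by natural numbers in absolute value. -/
open Matrix

def PSD {F : Type*} [Field F] [LinearOrder F] [IsStrictOrderedRing F] {n : ℕ} (M : Matrix (Fin n) (Fin n) F) : Prop :=
  ∀ v : Fin n → F, 0 ≤ v ⬝ᵥ M.mulVec v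

section aux

variable {F : Type*} [Field F] [LinearOrder F] [IsStrictOrderedRing F] {n : ℕ}

lemma dp_self_nonneg (v : Fin n → F) : 0 ≤ v ⬝ᵥ v :=
  Finset.sum_nonneg fun i _ => mul_self_nonneg _

lemma quad_eq (A : Matrix (Fin n) (Fin n) F) (v : Fin n → F) :
    v ⬝ᵥ (Aᵀ * A).mulVec v = (A.mulVec v) ⬝ᵥ (A.mulVec v) := by
  rw [← mulVec_mulVec, dotProduct_mulVec, vecMul_transpose]

lemma entry_sq_le (w : Fin n → F) (i : Fin n) : (w i)^2 ≤ w ⬝ᵥ w := by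
  have := Finset.single_le_sum (f := fun k => w k * w k)
    (fun k _ => mul_self_nonneg (w k)) (Finset.mem_univ i)
  simpa [dotProduct, sq] using this

lemma abs_le_of_sq_le {a s : F} (hs : 1 ≤ s) (h : a^2 ≤ s) : |a| ≤ s := by
  nlinarith [abs_nonneg a, sq_abs a]

lemma opnorm_bound (M : Matrix (Fin n) (Fin n) F) (c : F) (hc : 0 ≤ c)
    (h : ∀ i j, |M i j| ≤ c) (v : Fin n → F) :
    (M.mulVec v) ⬝ᵥ (M.mulVec v) ≤ ((n : F)^2 * c^2) * (v ⬝ᵥ v) := by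
  have hv : 0 ≤ v ⬝ᵥ v := dp_self_nonneg v
  have key : ∀ i, (M.mulVec v i) * (M.mulVec v i) ≤ ((n : F) * c^2) * (v ⬝ᵥ v) := by
    intro i
    have cs := Finset.sum_mul_sq_le_sq_mul_sq Finset.univ (fun j => M i j) v
    have hrow : ∑ j, (M i j)^2 ≤ (n : F) * c^2 := by
      calc ∑ j, (M i j)^2 ≤ ∑ _j : Fin n, c^2 := by
            apply Finset.sum_le_sum
            intro j _
            have := h i j
            nlinarith [abs_nonneg (M i j), sq_abs (M i j)]
        _ = (n : F) * c^2 := by simp [mul_comm]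
    have hmv : M.mulVec v i = ∑ j, M i j * v j := rfl
    have hdp : v ⬝ᵥ v = ∑ j, (v j)^2 := by simp [dotProduct, sq]
    calc (M.mulVec v i) * (M.mulVec v i) = (∑ j, M i j * v j)^2 := by rw [hmv, sq]
      _ ≤ (∑ j, (M i j)^2) * (∑ j, (v j)^2) := cs
      _ ≤ ((n : F) * c^2) * (v ⬝ᵥ v) := by
          rw [← hdp]
          exact mul_le_mul_of_nonneg_right hrow hv
  calc (M.mulVec v) ⬝ᵥ (M.mulVec v) = ∑ i, (M.mulVec v i) * (M.mulVec v i) := rfl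
    _ ≤ ∑ _i : Fin n, ((n : F) * c^2) * (v ⬝ᵥ v) := Finset.sum_le_sum fun i _ => key i
    _ = ((n : F)^2 * c^2) * (v ⬝ᵥ v) := by push_cast; ring_nf; simp [Finset.sum_const]; ring

lemma psd_unfold (c : F) (M : Matrix (Fin n) (Fin n) F) (v : Fin n → F) :
    v ⬝ᵥ ((c • (1 : Matrix (Fin n) (Fin n) F) - M).mulVec v)
      = c * (v ⬝ᵥ v) - v ⬝ᵥ M.mulVec v := by
  simp [sub_mulVec, smul_mulVec, dotProduct_sub, dotProduct_smul, smul_eq_mul]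

end aux

theorem stmt_12 (F : Type*) [Field F] [LinearOrder F] [IsStrictOrderedRing F] (n : ℕ)
    (A : Matrix (Fin n) (Fin n) F) :
    (∃ r : ℕ, PSD ((r : F) • (1 : Matrix (Fin n) (Fin n) F) - Aᵀ * A) ∧
        PSD ((r : F) • (Aᵀ * A) - (1 : Matrix (Fin n) (Fin n) F))) ↔
      (IsUnit A ∧ (∀ i j, ∃ r : ℕ, |A i j| ≤ (r : F)) ∧
        (∀ i j, ∃ r : ℕ, |A⁻¹ i j| ≤ (r : F))) := by
  constructor
  · rintro ⟨r, h1, h2⟩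
    set s : F := (r : F) + 1 with hs
    have hs1 : (1 : F) ≤ s := by
      have : (0:F) ≤ (r:F) := Nat.cast_nonneg r
      linarith
    have hr_s : (r : F) ≤ s := by simp [hs]
    -- upper bound : |Av|² ≤ s |v|²
    have h1' : ∀ v : Fin n → F, (A.mulVec v) ⬝ᵥ (A.mulVec v) ≤ s * (v ⬝ᵥ v) := by
      intro v
      have := h1 v
      rw [psd_unfold, quad_eq] at this
      have hv := dp_self_nonneg v
      nlinarith
    -- lower bound : |v|² ≤ s |Av|²
    have h2' : ∀ v : Fin n → F, v ⬝ᵥ v ≤ s * ((A.mulVec v) ⬝ᵥ (A.mulVec v)) := by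
      intro v
      have := h2 v
      have e : v ⬝ᵥ (((r : F) • (Aᵀ * A) - 1).mulVec v)
          = (r : F) * ((A.mulVec v) ⬝ᵥ (A.mulVec v)) - v ⬝ᵥ v := by
        simp [sub_mulVec, smul_mulVec, dotProduct_sub, dotProduct_smul,
          smul_eq_mul, quad_eq]
      rw [e] at this
      have hq := dp_self_nonneg (A.mulVec v)
      nlinarith
    -- invertibility
    have hdet : A.det ≠ 0 := by
      intro hd
      rcases (Matrix.exists_mulVec_eq_zero_iff.mpr hd) with ⟨v, hv0, hv⟩
      have := h2' v
      rw [hv] at this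
      simp at this
      exact hv0 ((dotProduct_self_eq_zero).mp (le_antisymm this (dp_self_nonneg v)))
    have hA : IsUnit A := (Matrix.isUnit_iff_isUnit_det A).mpr (isUnit_iff_ne_zero.mpr hdet)
    refine ⟨hA, ?_, ?_⟩
    · intro i j
      refine ⟨r + 1, ?_⟩
      have hsq : (A i j)^2 ≤ s := by
        have hv := h1' (Pi.single j 1)
        have hmv : A.mulVec (Pi.single j 1) = fun i => A i j := by
          ext k; simp [mulVec_single]
        rw [hmv] at hv
        have hd : (Pi.single j (1:F)) ⬝ᵥ (Pi.single j 1) = 1 := by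
          simp [dotProduct_single]
        rw [hd, mul_one] at hv
        calc (A i j)^2 ≤ (fun k => A k j) ⬝ᵥ (fun k => A k j) := entry_sq_le (fun k => A k j) i
          _ ≤ s := hv
      have := abs_le_of_sq_le hs1 hsq
      push_cast
      linarith
    · intro i j
      refine ⟨r + 1, ?_⟩
      set w : Fin n → F := A⁻¹.mulVec (Pi.single j 1) with hw
      have hAw : A.mulVec w = Pi.single j 1 := by
        rw [hw, mulVec_mulVec, Matrix.mul_nonsing_inv A
          (isUnit_iff_ne_zero.mpr hdet), one_mulVec]
      have hsq : (A⁻¹ i j)^2 ≤ s := by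
        have hv := h2' w
        rw [hAw] at hv
        have hd : (Pi.single j (1:F)) ⬝ᵥ (Pi.single j 1) = 1 := by
          simp [dotProduct_single]
        rw [hd, mul_one] at hv
        have hwi : w i = A⁻¹ i j := by simp [hw, mulVec_single]
        calc (A⁻¹ i j)^2 = (w i)^2 := by rw [hwi]
          _ ≤ w ⬝ᵥ w := entry_sq_le _ i
          _ ≤ s := hv
      have := abs_le_of_sq_le hs1 hsq
      push_cast
      linarith
  · rintro ⟨hA, hb, hbi⟩
    have hdet : IsUnit A.det := (Matrix.isUnit_iff_isUnit_det A).mp hA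
    -- uniform bounds
    set c : ℕ := ∑ i, ∑ j, (hb i j).choose with hc
    set d : ℕ := ∑ i, ∑ j, (hbi i j).choose with hd
    have hcb : ∀ i j, |A i j| ≤ (c : F) := by
      intro i j
      refine le_trans (hb i j).choose_spec ?_
      have : (hb i j).choose ≤ c := by
        calc (hb i j).choose ≤ ∑ j', (hb i j').choose :=
              Finset.single_le_sum (f := fun j' => (hb i j').choose) (fun _ _ => Nat.zero_le _) (Finset.mem_univ j)
          _ ≤ c := Finset.single_le_sum (f := fun i' => ∑ j', (hb i' j').choose)
              (fun _ _ => Nat.zero_le _) (Finset.mem_univ i)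
      exact_mod_cast this
    have hdb : ∀ i j, |A⁻¹ i j| ≤ (d : F) := by
      intro i j
      refine le_trans (hbi i j).choose_spec ?_
      have : (hbi i j).choose ≤ d := by
        calc (hbi i j).choose ≤ ∑ j', (hbi i j').choose :=
              Finset.single_le_sum (f := fun j' => (hbi i j').choose) (fun _ _ => Nat.zero_le _) (Finset.mem_univ j)
          _ ≤ d := Finset.single_le_sum (f := fun i' => ∑ j', (hbi i' j').choose)
              (fun _ _ => Nat.zero_le _) (Finset.mem_univ i)
      exact_mod_cast this
    refine ⟨n^2 * c^2 + n^2 * d^2, ?_, ?_⟩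
    · intro v
      rw [psd_unfold, quad_eq]
      have hbd := opnorm_bound A (c : F) (Nat.cast_nonneg c) hcb v
      have hv := dp_self_nonneg v
      have hq := dp_self_nonneg (A.mulVec v)
      have hcast : ((n^2 * c^2 + n^2 * d^2 : ℕ) : F)
          = (n : F)^2 * (c : F)^2 + (n : F)^2 * (d : F)^2 := by push_cast; ring
      rw [hcast]
      nlinarith [sq_nonneg ((n : F) * (d : F)), mul_nonneg (mul_nonneg (sq_nonneg (n:F)) (sq_nonneg (d:F))) hv]
    · intro v
      have e : v ⬝ᵥ ((((n^2 * c^2 + n^2 * d^2 : ℕ) : F) • (Aᵀ * A) - 1).mulVec v)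
          = ((n^2 * c^2 + n^2 * d^2 : ℕ) : F) * ((A.mulVec v) ⬝ᵥ (A.mulVec v)) - v ⬝ᵥ v := by
        simp [sub_mulVec, smul_mulVec, dotProduct_sub, dotProduct_smul,
          smul_eq_mul, quad_eq]
      rw [e]
      have hbd := opnorm_bound A⁻¹ (d : F) (Nat.cast_nonneg d) hdb (A.mulVec v)
      have hinv : A⁻¹.mulVec (A.mulVec v) = v := by
        rw [mulVec_mulVec, Matrix.nonsing_inv_mul A hdet, one_mulVec]
      rw [hinv] at hbd
      have hv := dp_self_nonneg v
      have hq := dp_self_nonneg (A.mulVec v)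
      have hcast : ((n^2 * c^2 + n^2 * d^2 : ℕ) : F)
          = (n : F)^2 * (c : F)^2 + (n : F)^2 * (d : F)^2 := by push_cast; ring
      rw [hcast]
      nlinarith [mul_nonneg (mul_nonneg (sq_nonneg (n:F)) (sq_nonneg (c:F))) hq]
end

section
/- Let F be a linearly ordered field. For A, B ∈ Mₙ(F), the following are equivalent: (1) for every C ∈ Mₙ(F) there exists r ∈ ℕ with (CA)ᵀ(CA) ≤ r·(CB)ᵀ(CB) (Loewner order); (2) there exists a bounded α ∈ F (|α| ≤ r for some r ∈ ℕ) with A = α·B. -/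
open Matrix

section aux
variable {F : Type*} [Field F] [LinearOrder F] [IsStrictOrderedRing F] {n : ℕ}

lemma quadform (M : Matrix (Fin n) (Fin n) F) (v : Fin n → F) :
    v ⬝ᵥ (Mᵀ * M).mulVec v = M.mulVec v ⬝ᵥ M.mulVec v := by
  rw [← mulVec_mulVec, dotProduct_mulVec, vecMul_transpose]

lemma psd_ineq {r : ℕ} {D E : Matrix (Fin n) (Fin n) F}
    (h : PSD ((r : F) • (Dᵀ * D) - Eᵀ * E)) (v : Fin n → F) :
    E.mulVec v ⬝ᵥ E.mulVec v ≤ (r : F) * (D.mulVec v ⬝ᵥ D.mulVec v) := by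
  have h2 := h v
  rw [sub_mulVec, dotProduct_sub, smul_mulVec, dotProduct_smul, quadform, quadform,
    smul_eq_mul] at h2
  linarith

lemma dot_self_nonneg (w : Fin n → F) : 0 ≤ w ⬝ᵥ w :=
  Finset.sum_nonneg fun i _ => mul_self_nonneg (w i)

end aux

theorem stmt_18 (F : Type*) [Field F] [LinearOrder F] [IsStrictOrderedRing F] (n : ℕ)
    (A B : Matrix (Fin n) (Fin n) F) :
    (∀ C : Matrix (Fin n) (Fin n) F,
        ∃ r : ℕ, PSD ((r : F) • ((C * B)ᵀ * (C * B)) - (C * A)ᵀ * (C * A))) ↔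
      ∃ α : F, (∃ r : ℕ, |α| ≤ (r : F)) ∧ A = α • B := by
  constructor
  · intro h
    rcases Nat.eq_zero_or_pos n with h0 | hn
    · subst h0
      exact ⟨0, ⟨0, by simp⟩, by ext i j; exact i.elim0⟩
    set f : (Fin n → F) → (Fin n → F) → F := fun u v => u ⬝ᵥ A.mulVec v with hf
    set g : (Fin n → F) → (Fin n → F) → F := fun u v => u ⬝ᵥ B.mulVec v with hg
    -- key vanishing implication
    have key : ∀ u v : Fin n → F, g u v = 0 → f u v = 0 := by
      intro u v hguv
      obtain ⟨r, hr⟩ := h (Matrix.of fun _ j => u j)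
      have hineq := psd_ineq hr v
      have hCA : (Matrix.of (fun _ j => u j) * A).mulVec v = fun _ : Fin n => f u v := by
        rw [← mulVec_mulVec]; ext i; rfl
      have hCB : (Matrix.of (fun _ j => u j) * B).mulVec v = fun _ : Fin n => g u v := by
        rw [← mulVec_mulVec]; ext i; rfl
      rw [hCA, hCB] at hineq
      have hd : ∀ x : F, (fun _ : Fin n => x) ⬝ᵥ (fun _ : Fin n => x) = (n : F) * (x * x) := by
        intro x
        simp [dotProduct, Finset.sum_const, nsmul_eq_mul]
      rw [hd, hd, hguv] at hineq
      have hnpos : (0 : F) < (n : F) := by exact_mod_cast hn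
      have h7 : (n : F) * (f u v * f u v) = 0 :=
        le_antisymm (by linarith) (mul_nonneg hnpos.le (mul_self_nonneg _))
      rcases mul_eq_zero.mp h7 with h8 | h8
      · exact absurd h8 hnpos.ne'
      · exact mul_self_eq_zero.mp h8
    -- linearity of the forms
    have fR : ∀ (u : Fin n → F) (a : F) (v : Fin n → F) (b : F) (w : Fin n → F),
        f u (a • v - b • w) = a * f u v - b * f u w := by
      intro u a v b w
      simp [hf, mulVec_sub, mulVec_smul, dotProduct_sub, dotProduct_smul, smul_eq_mul]
    have gR : ∀ (u : Fin n → F) (a : F) (v : Fin n → F) (b : F) (w : Fin n → F),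
        g u (a • v - b • w) = a * g u v - b * g u w := by
      intro u a v b w
      simp [hg, mulVec_sub, mulVec_smul, dotProduct_sub, dotProduct_smul, smul_eq_mul]
    have fL : ∀ (a : F) (u : Fin n → F) (b : F) (w v : Fin n → F),
        f (a • u - b • w) v = a * f u v - b * f w v := by
      intro a u b w v
      simp [hf, sub_dotProduct, smul_dotProduct, smul_eq_mul]
    have gL : ∀ (a : F) (u : Fin n → F) (b : F) (w v : Fin n → F),
        g (a • u - b • w) v = a * g u v - b * g w v := by
      intro a u b w v
      simp [hg, sub_dotProduct, smul_dotProduct, smul_eq_mul]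
    have fadd : ∀ (u v w : Fin n → F), f u (v + w) = f u v + f u w := by
      intro u v w
      simp [hf, mulVec_add, dotProduct_add]
    have gadd : ∀ (u v w : Fin n → F), g u (v + w) = g u v + g u w := by
      intro u v w
      simp [hg, mulVec_add, dotProduct_add]
    have hsingle : ∀ (M : Matrix (Fin n) (Fin n) F) (i j : Fin n),
        (Pi.single i 1 : Fin n → F) ⬝ᵥ M.mulVec (Pi.single j 1) = M i j := by
      intro M i j
      simp [mulVec_single, dotProduct_single]
    by_cases hB : B = 0
    · refine ⟨0, ⟨0, by simp⟩, ?_⟩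
      have hA : A = 0 := by
        ext i j
        have := key (Pi.single i 1) (Pi.single j 1) (by simp [hg, hB])
        simpa [hf, mulVec_single, dotProduct_single] using this
      simp [hA]
    · have hex : ∃ i j, B i j ≠ 0 := by
        by_contra hc
        push_neg at hc
        exact hB (by ext i j; simpa using hc i j)
      obtain ⟨i0, j0, hB0⟩ := hex
      set u0 : Fin n → F := Pi.single i0 1 with hu0
      set v0 : Fin n → F := Pi.single j0 1 with hv0
      have hg00 : g u0 v0 = B i0 j0 := hsingle B i0 j0
      have hg0 : g u0 v0 ≠ 0 := by rw [hg00]; exact hB0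
      set α : F := f u0 v0 / g u0 v0 with hα
      have step1 : ∀ v, f u0 v = α * g u0 v := by
        intro v
        have hz : g u0 (g u0 v0 • v - g u0 v • v0) = 0 := by rw [gR]; ring
        have h1 := key _ _ hz
        rw [fR] at h1
        rw [hα, div_mul_eq_mul_div, eq_div_iff hg0]
        linarith
      have step2 : ∀ u v, g u0 v ≠ 0 → f u v = α * g u v := by
        intro u v hgv
        have hz : g (g u0 v • u - g u v • u0) v = 0 := by rw [gL]; ring
        have h2 := key _ _ hz
        rw [fL] at h2
        have h3 := step1 v
        have h4 : g u0 v * f u v = g u0 v * (α * g u v) := by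
          linear_combination h2 + g u v * h3
        exact mul_left_cancel₀ hgv h4
      have step3 : ∀ u v, f u v = α * g u v := by
        intro u v
        by_cases hgv : g u0 v = 0
        · have h1 : g u0 (v + v0) ≠ 0 := by
            rw [gadd, hgv, zero_add]; exact hg0
          have e1 := step2 u (v + v0) h1
          have e2 := step2 u v0 hg0
          rw [fadd, gadd] at e1
          linear_combination e1 - e2
        · exact step2 u v hgv
      have hAB : A = α • B := by
        ext i j
        have h5 := step3 (Pi.single i 1) (Pi.single j 1)
        rw [show f _ _ = A i j from hsingle A i j,
          show g _ _ = B i j from hsingle B i j] at h5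
        simpa [Matrix.smul_apply, smul_eq_mul] using h5
      -- boundedness via C = 1
      obtain ⟨r, hr⟩ := h 1
      rw [one_mul, one_mul] at hr
      have hq := psd_ineq hr v0
      have hBpos : 0 < B.mulVec v0 ⬝ᵥ B.mulVec v0 := by
        refine Finset.sum_pos' (fun i _ => mul_self_nonneg _) ⟨i0, Finset.mem_univ _, ?_⟩
        have hBv : B.mulVec v0 i0 = B i0 j0 := by simp [hv0, mulVec_single]
        rw [hBv]
        exact mul_self_pos.mpr hB0
      have hAv : A.mulVec v0 = α • B.mulVec v0 := by rw [hAB, smul_mulVec]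
      rw [hAv, smul_dotProduct, dotProduct_smul, smul_eq_mul, smul_eq_mul, ← mul_assoc] at hq
      have hα2 : α * α ≤ (r : F) :=
        le_of_mul_le_mul_right (by linarith) hBpos
      refine ⟨α, ⟨r + 1, ?_⟩, hAB⟩
      push_cast
      nlinarith [abs_nonneg α, abs_mul_abs_self α, Nat.cast_nonneg (α := F) r]
  · rintro ⟨α, ⟨r, hαr⟩, rfl⟩
    intro C
    refine ⟨r * r, ?_⟩
    intro v
    have hC : C * (α • B) = α • (C * B) := by rw [Matrix.mul_smul]
    rw [hC]
    have ht : (α • (C * B))ᵀ * (α • (C * B)) = (α * α) • ((C * B)ᵀ * (C * B)) := by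
      rw [transpose_smul, Matrix.smul_mul, Matrix.mul_smul, smul_smul]
    rw [ht, sub_mulVec, dotProduct_sub, smul_mulVec, smul_mulVec,
      dotProduct_smul, dotProduct_smul, quadform, smul_eq_mul, smul_eq_mul]
    have hS := dot_self_nonneg ((C * B).mulVec v)
    have hr2 : ((r * r : ℕ) : F) = (r : F) * r := by push_cast; ring
    rw [hr2]
    have h1 : α * α ≤ (r : F) * (r : F) := by
      nlinarith [abs_nonneg α, abs_mul_abs_self α]
    nlinarith [mul_nonneg (sub_nonneg.mpr h1) hS]
end
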